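/- Let p, q, r ≥ 2 and s ≤ −1 be integers, and let N = p + q + r − 1. Let Q be the Gram matrix of the star-shaped plumbing graph consisting of a central vertex of weight −3, three chains of p − 1, q − 1, and r − 1 vertices of weight −2 attached to the central vertex, and one additional vertex of weight s adjacent to the central vertex. If Q admits a lattice embedding into ℤ^N, then two of the integers p, q, r are equal to 2 and, denoting by u the remaining one, there is an integer λ such that s = −uλ² − (λ+1)². -/

import Mathlib

/-- The Gram matrix of a star-shaped plumbing graph: a central vertex of weight
`w0`; for each `i : ι` a chain of `L i` vertices of weight `−2` whose last
vertex is adjacent to the central vertex; and for each `a : κ` an extra vertex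
of weight `w a` adjacent to the central vertex. Diagonal entries are the
weights, entries at adjacent pairs of vertices are 1, all other entries are 0. -/
def starGram {ι κ : Type} [DecidableEq ι] [DecidableEq κ]
    (w0 : ℤ) (L : ι → ℕ) (w : κ → ℤ) :
    Matrix (Unit ⊕ ((Σ i : ι, Fin (L i)) ⊕ κ)) (Unit ⊕ ((Σ i : ι, Fin (L i)) ⊕ κ)) ℤ :=
  fun u v =>
    match u, v with
    | Sum.inl _, Sum.inl _ => w0
    | Sum.inl _, Sum.inr (Sum.inl ⟨i, j⟩) => if (j : ℕ) + 1 = L i then 1 else 0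
    | Sum.inl _, Sum.inr (Sum.inr _) => 1
    | Sum.inr (Sum.inl ⟨i, j⟩), Sum.inl _ => if (j : ℕ) + 1 = L i then 1 else 0
    | Sum.inr (Sum.inr _), Sum.inl _ => 1
    | Sum.inr (Sum.inl ⟨i, j⟩), Sum.inr (Sum.inl ⟨i', j'⟩) =>
        if i = i' then
          if (j : ℕ) = (j' : ℕ) then -2
          else if (j : ℕ) + 1 = (j' : ℕ) ∨ (j' : ℕ) + 1 = (j : ℕ) then 1 else 0
        else 0
    | Sum.inr (Sum.inl _), Sum.inr (Sum.inr _) => 0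
    | Sum.inr (Sum.inr _), Sum.inr (Sum.inl _) => 0
    | Sum.inr (Sum.inr a), Sum.inr (Sum.inr b) => if a = b then w a else 0

/-- A lattice embedding of the Gram matrix `Q` into `ℤ^N`: a ℤ-linear map
`φ : ℤ^V → ℤ^N` with `⟨φ(x), φ(y)⟩ = −xᵀQy` for all `x, y`. -/
def IsLatticeEmbedding {V : Type} [Fintype V] (Q : Matrix V V ℤ) (N : ℕ)
    (φ : (V → ℤ) →ₗ[ℤ] (Fin N → ℤ)) : Prop :=
  ∀ x y : V → ℤ, (∑ m, φ x m * φ y m) = -(∑ a, ∑ b, x a * Q a b * y b)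

/-- The support of the `φ`-image of the `i`-th chain: the union of the supports
of `φ` applied to the standard basis vectors corresponding to its vertices. -/
def chainSupport {ι κ : Type} [DecidableEq ι] [DecidableEq κ]
    {L : ι → ℕ} {N : ℕ}
    (φ : ((Unit ⊕ ((Σ i : ι, Fin (L i)) ⊕ κ)) → ℤ) →ₗ[ℤ] (Fin N → ℤ)) (i : ι) :
    Set (Fin N) :=
  ⋃ j : Fin (L i), Function.support (φ (Pi.single (Sum.inr (Sum.inl ⟨i, j⟩)) 1))

set_option maxHeartbeats 1000000

namespace P16

variable {N : ℕ}


variable {N : ℕ}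

def dot (v w : Fin N → ℤ) : ℤ := ∑ m, v m * w m

lemma dot_comm (v w : Fin N → ℤ) : dot v w = dot w v :=
  Finset.sum_congr rfl fun x _ => mul_comm _ _

def two (a b : Fin N) (α β : ℤ) : Fin N → ℤ :=
  fun x => if x = a then α else if x = b then β else 0

lemma two_apply_left (a b : Fin N) (α β : ℤ) : two a b α β a = α := by simp [two]

lemma two_apply_right {a b : Fin N} (h : a ≠ b) (α β : ℤ) : two a b α β b = β := by
  simp [two, Ne.symm h]

lemma two_apply_other {a b x : Fin N} (hxa : x ≠ a) (hxb : x ≠ b) (α β : ℤ) :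
    two a b α β x = 0 := by simp [two, hxa, hxb]

lemma two_ne_zero {a b x : Fin N} {α β : ℤ} (h : two a b α β x ≠ 0) : x = a ∨ x = b := by
  by_contra hc
  push_neg at hc
  exact h (two_apply_other hc.1 hc.2 _ _)

lemma two_comm {a b : Fin N} (h : a ≠ b) (α β : ℤ) : two a b α β = two b a β α := by
  funext x
  by_cases h1 : x = a
  · subst h1; simp [two, h, Ne.symm h]
  · by_cases h2 : x = b
    · subst h2; simp [two, h1, Ne.symm h]
    · simp [two, h1, h2]

lemma dot_two {a b : Fin N} (h : a ≠ b) (α β : ℤ) (w : Fin N → ℤ) :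
    dot (two a b α β) w = α * w a + β * w b := by
  unfold dot
  have key : ∀ x : Fin N, two a b α β x * w x
      = (if a = x then α * w a else 0) + (if b = x then β * w b else 0) := by
    intro x
    by_cases h1 : x = a
    · subst h1; simp [two, h, Ne.symm h]
    · by_cases h2 : x = b
      · subst h2; simp [two, h1, Ne.symm h1, Ne.symm h]
      · simp [two, h1, h2, Ne.symm h1, Ne.symm h2]
  rw [Finset.sum_congr rfl fun x _ => key x, Finset.sum_add_distrib,
    Finset.sum_ite_eq, Finset.sum_ite_eq]
  simp

lemma entries {v : Fin N → ℤ} {k : ℤ} (h : dot v v = k) (hk : k ≤ 3) (x : Fin N) :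
    v x = -1 ∨ v x = 0 ∨ v x = 1 := by
  have h1 : v x * v x ≤ k := by
    rw [← h]
    exact Finset.single_le_sum (fun i _ => mul_self_nonneg (v i)) (Finset.mem_univ x)
  have h2 : -1 ≤ v x ∧ v x ≤ 1 := by constructor <;> nlinarith
  omega

lemma norm_two {v : Fin N → ℤ} (h : dot v v = 2) :
    ∃ g h' : Fin N, g ≠ h' ∧ v g * v g = 1 ∧ v h' * v h' = 1 ∧ v = two g h' (v g) (v h') := by
  classical
  have hent := entries h (by norm_num)
  have hcard : (Finset.univ.filter (fun x => v x ≠ 0)).card = 2 := by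
    have hh : ((Finset.univ.filter (fun x => v x ≠ 0)).card : ℤ) = 2 := by
      rw [← h]
      unfold dot
      rw [Finset.card_filter]
      push_cast
      refine (Finset.sum_congr rfl ?_).symm
      intro x _
      rcases hent x with h'|h'|h' <;> simp [h']
    exact_mod_cast hh
  obtain ⟨g, h', hgh, hset⟩ := Finset.card_eq_two.mp hcard
  have hmem : ∀ x : Fin N, v x ≠ 0 ↔ (x = g ∨ x = h') := by
    intro x
    constructor
    · intro hx
      have : x ∈ Finset.univ.filter (fun x => v x ≠ 0) := by simp [hx]
      rw [hset] at this
      simpa using this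
    · intro hx
      have : x ∈ ({g, h'} : Finset (Fin N)) := by simpa using hx
      rw [← hset] at this
      simpa using this
  have hvg : v g ≠ 0 := (hmem g).mpr (Or.inl rfl)
  have hvh : v h' ≠ 0 := (hmem h').mpr (Or.inr rfl)
  refine ⟨g, h', hgh, ?_, ?_, ?_⟩
  · rcases hent g with h1|h1|h1 <;> simp [h1] at hvg ⊢
  · rcases hent h' with h1|h1|h1 <;> simp [h1] at hvh ⊢
  · funext x
    by_cases h1 : x = g
    · subst h1; simp [two]
    · by_cases h2 : x = h'
      · subst h2; rw [two_apply_right hgh]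
      · rw [two_apply_other h1 h2]
        by_contra hx
        rcases (hmem x).mp hx with h'|h' <;> tauto

def IsChain (z : ℕ → Fin N → ℤ) (m : ℕ) : Prop :=
  (∀ j, j < m → dot (z j) (z j) = 2) ∧
  (∀ j, j + 1 < m → dot (z j) (z (j + 1)) = -1) ∧
  (∀ j k, j < k → k < m → j + 1 ≠ k → dot (z j) (z k) = 0)

def StdChain (z : ℕ → Fin N → ℤ) (m : ℕ) (a : ℕ → Fin N) (s : ℕ → ℤ) : Prop :=
  (∀ j k, j ≤ m → k ≤ m → a j = a k → j = k) ∧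
  (∀ j, j ≤ m → s j * s j = 1) ∧
  (∀ j, j < m → z j = two (a j) (a (j + 1)) (s j) (-(s (j + 1))))

lemma run_const {s ζ : ℕ → ℤ} {m : ℕ}
    (h : ∀ j, j + 1 < m → s j * ζ j = s (j + 1) * ζ (j + 1)) :
    ∀ j, j < m → s j * ζ j = s 0 * ζ 0 := by
  intro j
  induction j with
  | zero => intro _; rfl
  | succ n ih =>
    intro hn
    rw [← h n (by omega)]
    exact ih (by omega)

lemma std_one {z : ℕ → Fin N → ℤ} (h2 : dot (z 0) (z 0) = 2) :
    ∃ a s, StdChain z 1 a s := by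
  obtain ⟨g, h', hgh, hg, hh, hform⟩ := norm_two h2
  refine ⟨fun j => if j = 0 then g else h', fun j => if j = 0 then z 0 g else -(z 0 h'),
    ?_, ?_, ?_⟩
  · intro j k hj hk he
    interval_cases j <;> interval_cases k <;>
      first
      | rfl
      | exact absurd (show g = h' from he) hgh
      | exact absurd (show h' = g from he) (Ne.symm hgh)
  · intro j hj
    interval_cases j
    · show z 0 g * z 0 g = 1
      exact hg
    · show -(z 0 h') * -(z 0 h') = 1
      linear_combination hh
  · intro j hj
    have hj0 : j = 0 := by omega
    subst hj0
    show z 0 = two g h' (z 0 g) (-(-(z 0 h')))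
    rw [neg_neg]
    exact hform

lemma chain_step {z : ℕ → Fin N → ℤ} {m : ℕ} (hm : 1 ≤ m)
    {a : ℕ → Fin N} {s : ℕ → ℤ} (hstd : StdChain z m a s)
    (h2 : dot (z m) (z m) = 2)
    (hlast : dot (z (m - 1)) (z m) = -1)
    (hperp : ∀ j, j + 1 < m → dot (z j) (z m) = 0) :
    (∃ a' s', StdChain z (m + 1) a' s') ∨
    (m = 2 ∧ z 2 = two (a 0) (a 1) (-(s 0)) (-(s 1))) := by
  obtain ⟨hinj, hunit, hform⟩ := hstd
  have hane : ∀ j, j < m → a j ≠ a (j + 1) := by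
    intro j hj he
    have := hinj j (j + 1) (by omega) (by omega) he
    omega
  have hrel : ∀ j, j + 1 < m → s j * z m (a j) = s (j + 1) * z m (a (j + 1)) := by
    intro j hj
    have h0 := hperp j hj
    rw [hform j (by omega), dot_two (hane j (by omega))] at h0
    linarith
  have hη := run_const hrel
  obtain ⟨η, hηdef⟩ : ∃ η : ℤ, η = s 0 * z m (a 0) := ⟨_, rfl⟩
  have hη' : ∀ j, j < m → s j * z m (a j) = η := by
    intro j hj; rw [hηdef]; exact hη j hj
  have hlast' : s (m - 1) * z m (a (m - 1)) + -(s m) * z m (a m) = -1 := by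
    have hh := hlast
    rw [hform (m - 1) (by omega), dot_two (hane (m - 1) (by omega))] at hh
    have e : m - 1 + 1 = m := by omega
    rw [e] at hh
    exact hh
  have hsmζ : s m * z m (a m) = η + 1 := by
    have := hη' (m - 1) (by omega)
    linarith
  have hent : ∀ x, z m x = -1 ∨ z m x = 0 ∨ z m x = 1 := entries h2 (by norm_num)
  have hsum : (∑ k ∈ Finset.range (m + 1), z m (a k) * z m (a k)) ≤ 2 := by
    rw [← h2]
    unfold dot
    have himg : ∑ k ∈ Finset.range (m + 1), z m (a k) * z m (a k)
        = ∑ x ∈ (Finset.range (m + 1)).image a, z m x * z m x := by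
      rw [Finset.sum_image]
      intro x hx y hy he
      exact hinj x y (by simp at hx; omega) (by simp at hy; omega) he
    rw [himg]
    exact Finset.sum_le_sum_of_subset_of_nonneg (Finset.subset_univ _)
      (fun i _ _ => mul_self_nonneg _)
  have hζsq : ∀ j, j < m → z m (a j) * z m (a j) = η * η := by
    intro j hj
    have h1 := hη' j hj
    have hu := hunit j (by omega)
    linear_combination (s j * z m (a j) + η) * h1 - (z m (a j) * z m (a j)) * hu
  have hζmsq : z m (a m) * z m (a m) = (η + 1) * (η + 1) := by
    have hu := hunit m (le_refl m)
    linear_combination (s m * z m (a m) + (η + 1)) * hsmζ - (z m (a m) * z m (a m)) * hu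
  have hsum2 : (∑ k ∈ Finset.range (m + 1), z m (a k) * z m (a k))
      = m * (η * η) + (η + 1) * (η + 1) := by
    rw [Finset.sum_range_succ, hζmsq]
    congr 1
    rw [Finset.sum_congr rfl (fun k hk => hζsq k (Finset.mem_range.mp hk))]
    simp [mul_comm]
  have hηsmall : η = -1 ∨ η = 0 ∨ η = 1 := by
    have h1 := hent (a 0)
    have hu := hunit 0 (by omega)
    rcases mul_self_eq_one_iff.mp hu with h|h <;> rw [hηdef, h] <;> omega
  have hη01 : η = 0 ∨ η = -1 := by
    rcases hηsmall with h|h|h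
    · right; exact h
    · left; exact h
    · exfalso; rw [hsum2, h] at hsum; nlinarith [Nat.one_le_iff_ne_zero.mp hm,
        (by exact_mod_cast hm : (1:ℤ) ≤ (m:ℤ))]
  obtain ⟨g, h', hgh, hg1, hh1, hform'⟩ := norm_two h2
  rcases hη01 with hη0 | hηm1
  · -- extension case
    left
    have hζ0 : ∀ j, j < m → z m (a j) = 0 := by
      intro j hj
      have h1 := hη' j hj
      rw [hη0] at h1
      have hu := hunit j (by omega)
      linear_combination s j * h1 - z m (a j) * hu
    have hζm : z m (a m) = s m := by
      rw [hη0] at hsmζ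
      have hu := hunit m (le_refl m)
      linear_combination s m * hsmζ - z m (a m) * hu
    have hζmne : z m (a m) ≠ 0 := by
      intro h0
      rw [h0] at hζm
      have hu := hunit m (le_refl m)
      rw [← hζm] at hu
      simp at hu
    have ham : a m = g ∨ a m = h' := by
      apply two_ne_zero (α := z m g) (β := z m h')
      rw [← hform']
      exact hζmne
    obtain ⟨g', h'', hgh2, hg2, hh2, hform2, hgam⟩ :
        ∃ g' h'', g' ≠ h'' ∧ z m g' * z m g' = 1 ∧ z m h'' * z m h'' = 1 ∧
          z m = two g' h'' (z m g') (z m h'') ∧ g' = a m := by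
      rcases ham with h|h
      · exact ⟨g, h', hgh, hg1, hh1, hform', h.symm⟩
      · exact ⟨h', g, hgh.symm, hh1, hg1, hform'.trans (two_comm hgh _ _), h.symm⟩
    have hvh2 : z m h'' ≠ 0 := by intro h0; rw [h0] at hh2; simp at hh2
    have hfresh : ∀ j, j ≤ m → h'' ≠ a j := by
      intro j hj he
      rcases Nat.lt_or_ge j m with h|h
      · exact hvh2 (by rw [he]; exact hζ0 j h)
      · have hjm : j = m := by omega
        rw [hjm] at he
        rw [← hgam] at he
        exact hgh2 he.symm
    refine ⟨fun j => if j ≤ m then a j else h'', fun j => if j ≤ m then s j else -(z m h''),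
      ?_, ?_, ?_⟩
    · intro j k hj hk he
      have he' : (if j ≤ m then a j else h'') = (if k ≤ m then a k else h'') := he
      by_cases h1 : j ≤ m <;> by_cases hk1 : k ≤ m
      · rw [if_pos h1, if_pos hk1] at he'; exact hinj j k h1 hk1 he'
      · rw [if_pos h1, if_neg hk1] at he'; exact absurd he'.symm (hfresh j h1)
      · rw [if_neg h1, if_pos hk1] at he'; exact absurd he' (hfresh k hk1)
      · omega
    · intro j hj
      show (if j ≤ m then s j else -(z m h'')) * (if j ≤ m then s j else -(z m h'')) = 1
      by_cases h1 : j ≤ m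
      · rw [if_pos h1]; exact hunit j h1
      · rw [if_neg h1]; linear_combination hh2
    · intro j hj
      show z j = two (if j ≤ m then a j else h'') (if j + 1 ≤ m then a (j + 1) else h'')
        (if j ≤ m then s j else -(z m h'')) (-(if j + 1 ≤ m then s (j + 1) else -(z m h'')))
      rcases Nat.lt_or_ge j m with h|h
      · have e1 : j ≤ m := by omega
        have e2 : j + 1 ≤ m := by omega
        rw [if_pos e1, if_pos e2, if_pos e1, if_pos e2]
        exact hform j h
      · have hjm : j = m := by omega
        subst hjm
        have e2 : ¬ (j + 1 ≤ j) := by omega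
        rw [if_pos (le_refl j), if_neg e2, if_pos (le_refl j), if_neg e2, neg_neg]
        rw [hgam, hζm] at hform2
        exact hform2
  · -- η = -1 : bent or relabel
    have hζj : ∀ j, j < m → z m (a j) = -(s j) := by
      intro j hj
      have h1 := hη' j hj
      rw [hηm1] at h1
      have hu := hunit j (by omega)
      linear_combination s j * h1 - z m (a j) * hu
    have hζm0 : z m (a m) = 0 := by
      rw [hηm1] at hsmζ
      have hu := hunit m (le_refl m)
      linear_combination s m * hsmζ - z m (a m) * hu
    have hmle2 : m ≤ 2 := by
      by_contra hc
      push_neg at hc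
      rw [hsum2, hηm1] at hsum
      have : (3:ℤ) ≤ (m:ℤ) := by exact_mod_cast hc
      nlinarith
    have hζjne : ∀ j, j < m → z m (a j) ≠ 0 := by
      intro j hj h0
      have hz := hζj j hj
      rw [h0] at hz
      have hu := hunit j (by omega)
      have hs0 : s j = 0 := by linarith
      rw [hs0] at hu
      simp at hu
    interval_cases m
    · -- m = 1 : relabel
      left
      have ha0 : a 0 = g ∨ a 0 = h' := by
        apply two_ne_zero (α := z 1 g) (β := z 1 h')
        rw [← hform']
        exact hζjne 0 (by omega)
      obtain ⟨g', h'', hgh2, hg2, hh2, hform2, hga⟩ :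
          ∃ g' h'', g' ≠ h'' ∧ z 1 g' * z 1 g' = 1 ∧ z 1 h'' * z 1 h'' = 1 ∧
            z 1 = two g' h'' (z 1 g') (z 1 h'') ∧ g' = a 0 := by
        rcases ha0 with h|h
        · exact ⟨g, h', hgh, hg1, hh1, hform', h.symm⟩
        · exact ⟨h', g, hgh.symm, hh1, hg1, hform'.trans (two_comm hgh _ _), h.symm⟩
      have hvh2 : z 1 h'' ≠ 0 := by intro h0; rw [h0] at hh2; simp at hh2
      have hfr1 : h'' ≠ a 1 := by
        intro he
        exact hvh2 (by rw [he]; exact hζm0)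
      have hfr0 : h'' ≠ a 0 := by rw [← hga]; exact hgh2.symm
      have hne01 : a 0 ≠ a 1 := hane 0 (by omega)
      refine ⟨fun j => if j = 0 then a 1 else if j = 1 then a 0 else h'',
        fun j => if j = 0 then -(s 1) else if j = 1 then -(s 0) else -(z 1 h''), ?_, ?_, ?_⟩
      · intro j k hj hk he
        interval_cases j <;> interval_cases k <;>
          first
            | rfl
            | exact absurd (show a 1 = a 0 from he) (Ne.symm hne01)
            | exact absurd (show a 0 = a 1 from he) hne01
            | exact absurd (show a 1 = h'' from he) (Ne.symm hfr1)
            | exact absurd (show h'' = a 1 from he) hfr1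
            | exact absurd (show a 0 = h'' from he) (Ne.symm hfr0)
            | exact absurd (show h'' = a 0 from he) hfr0
      · intro j hj
        have u0 := hunit 0 (by omega)
        have u1 := hunit 1 (by omega)
        interval_cases j
        · show -(s 1) * -(s 1) = 1
          linear_combination u1
        · show -(s 0) * -(s 0) = 1
          linear_combination u0
        · show -(z 1 h'') * -(z 1 h'') = 1
          linear_combination hh2
      · intro j hj
        interval_cases j
        · show z 0 = two (a 1) (a 0) (-(s 1)) (-(-(s 0)))
          rw [neg_neg]
          exact (hform 0 (by omega)).trans (two_comm hne01 _ _)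
        · show z 1 = two (a 0) h'' (-(s 0)) (-(-(z 1 h'')))
          rw [neg_neg]
          rw [hga, hζj 0 (by omega)] at hform2
          exact hform2
    · -- m = 2 : bent
      right
      refine ⟨rfl, ?_⟩
      have h0g : a 0 = g ∨ a 0 = h' := by
        apply two_ne_zero (α := z 2 g) (β := z 2 h')
        rw [← hform']
        exact hζjne 0 (by omega)
      have h1g : a 1 = g ∨ a 1 = h' := by
        apply two_ne_zero (α := z 2 g) (β := z 2 h')
        rw [← hform']
        exact hζjne 1 (by omega)
      have hne01 : a 0 ≠ a 1 := hane 0 (by omega)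
      have hz0 : z 2 (a 0) = -(s 0) := hζj 0 (by omega)
      have hz1 : z 2 (a 1) = -(s 1) := hζj 1 (by omega)
      rcases h0g with h0|h0 <;> rcases h1g with h1|h1
      · exact absurd (h0.trans h1.symm) hne01
      · rw [hform', ← h0, ← h1, hz0, hz1]
      · rw [hform', two_comm hgh, ← h0, ← h1, hz0, hz1]
      · exact absurd (h0.trans h1.symm) hne01


lemma isChain_mono {z : ℕ → Fin N → ℤ} {m m' : ℕ} (h : IsChain z m) (hle : m' ≤ m) :
    IsChain z m' :=
  ⟨fun j hj => h.1 j (by omega), fun j hj => h.2.1 j (by omega),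
   fun j k hjk hk hne => h.2.2 j k hjk (by omega) hne⟩

lemma chain_struct {z : ℕ → Fin N → ℤ} : ∀ {m : ℕ}, 1 ≤ m → IsChain z m →
    (∃ a s, StdChain z m a s) ∨
    (m = 3 ∧ ∃ a s, StdChain z 2 a s ∧ z 2 = two (a 0) (a 1) (-(s 0)) (-(s 1))) := by
  intro m
  induction m with
  | zero => intro h; omega
  | succ n ih =>
    intro _ hc
    rcases Nat.eq_zero_or_pos n with hn | hn
    · subst hn
      exact Or.inl (std_one (hc.1 0 (by omega)))
    · rcases ih hn (isChain_mono hc (by omega)) with ⟨a, s, hstd⟩ | ⟨hn3, a, s, hstd, hbent⟩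
      · -- standard prefix
        have hlast : dot (z (n - 1)) (z n) = -1 := by
          have := hc.2.1 (n - 1) (by omega)
          rwa [Nat.sub_add_cancel hn] at this
        have hperp : ∀ j, j + 1 < n → dot (z j) (z n) = 0 := by
          intro j hj
          exact hc.2.2 j n (by omega) (by omega) (by omega)
        rcases chain_step hn hstd (hc.1 n (by omega)) hlast hperp with h | ⟨hn2, hform⟩
        · exact Or.inl h
        · subst hn2
          exact Or.inr ⟨rfl, a, s, hstd, hform⟩
      · -- bent prefix: n = 3, z 3 exists, contradiction
        exfalso
        subst hn3
        obtain ⟨hinj, hunit, hform⟩ := hstd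
        have hane01 : a 0 ≠ a 1 := by
          intro he
          have := hinj 0 1 (by omega) (by omega) he
          omega
        have hd0 : dot (z 0) (z 3) = 0 := hc.2.2 0 3 (by omega) (by omega) (by omega)
        have hd2 : dot (z 2) (z 3) = -1 := hc.2.1 2 (by omega)
        rw [hform 0 (by omega), dot_two hane01] at hd0
        rw [hbent, dot_two hane01] at hd2
        obtain ⟨A, hA⟩ : ∃ A : ℤ, A = s 0 * z 3 (a 0) := ⟨_, rfl⟩
        obtain ⟨B, hB⟩ : ∃ B : ℤ, B = s 1 * z 3 (a 1) := ⟨_, rfl⟩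
        have e1 : A - B = 0 := by rw [hA, hB]; linarith
        have e2 : -A - B = -1 := by rw [hA, hB]; linarith
        omega

lemma chain_std_x0 {z : ℕ → Fin N → ℤ} {x₀ : Fin N → ℤ} {m : ℕ} (hm : 1 ≤ m)
    (hc : IsChain z m)
    (hx : ∀ j, j < m → dot x₀ (z j) = if j + 1 = m then -1 else 0) :
    ∃ a s, StdChain z m a s := by
  rcases chain_struct hm hc with h | ⟨hm3, a, s, hstd, hbent⟩
  · exact h
  · exfalso
    subst hm3
    obtain ⟨hinj, hunit, hform⟩ := hstd
    have hane01 : a 0 ≠ a 1 := by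
      intro he
      have := hinj 0 1 (by omega) (by omega) he
      omega
    have hd0 : dot x₀ (z 0) = 0 := by rw [hx 0 (by omega)]; norm_num
    have hd2 : dot x₀ (z 2) = -1 := by rw [hx 2 (by omega)]; norm_num
    rw [dot_comm, hform 0 (by omega), dot_two hane01] at hd0
    rw [dot_comm, hbent, dot_two hane01] at hd2
    obtain ⟨A, hA⟩ : ∃ A : ℤ, A = s 0 * x₀ (a 0) := ⟨_, rfl⟩
    obtain ⟨B, hB⟩ : ∃ B : ℤ, B = s 1 * x₀ (a 1) := ⟨_, rfl⟩
    have e1 : A - B = 0 := by rw [hA, hB]; linarith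
    have e2 : -A - B = -1 := by rw [hA, hB]; linarith
    omega

lemma unit_ne_zero {α : ℤ} (h : α * α = 1) : α ≠ 0 := by
  intro h0; rw [h0] at h; simp at h

lemma share_both {p1 p2 q1 q2 : Fin N} {α β γ δ : ℤ}
    (hp : p1 ≠ p2) (hq : q1 ≠ q2)
    (hα : α * α = 1) (hβ : β * β = 1) (hγ : γ * γ = 1) (hδ : δ * δ = 1)
    (hdot : dot (two p1 p2 α β) (two q1 q2 γ δ) = 0)
    (hsh : p1 = q1 ∨ p1 = q2 ∨ p2 = q1 ∨ p2 = q2) :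
    (p1 = q1 ∧ p2 = q2) ∨ (p1 = q2 ∧ p2 = q1) := by
  rw [dot_two hp] at hdot
  have hαne := unit_ne_zero hα
  have hβne := unit_ne_zero hβ
  have hγne := unit_ne_zero hγ
  have hδne := unit_ne_zero hδ
  have hw : ∀ x : Fin N, two q1 q2 γ δ x ≠ 0 → x = q1 ∨ x = q2 := fun x => two_ne_zero
  rcases hsh with h|h|h|h
  · left
    refine ⟨h, ?_⟩
    have h1 : two q1 q2 γ δ p1 = γ := by rw [h]; exact two_apply_left _ _ _ _
    rw [h1] at hdot
    have h2 : two q1 q2 γ δ p2 ≠ 0 := by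
      intro h0
      rw [h0] at hdot
      simp at hdot
      rcases hdot with h'|h' <;> [exact hαne h'; exact hγne h']
    rcases hw p2 h2 with h'|h'
    · exact absurd (h.trans h'.symm) hp
    · exact h'
  · right
    refine ⟨h, ?_⟩
    have h1 : two q1 q2 γ δ p1 = δ := by rw [h]; exact two_apply_right hq _ _
    rw [h1] at hdot
    have h2 : two q1 q2 γ δ p2 ≠ 0 := by
      intro h0
      rw [h0] at hdot
      simp at hdot
      rcases hdot with h'|h' <;> [exact hαne h'; exact hδne h']
    rcases hw p2 h2 with h'|h'
    · exact h'
    · exact absurd (h.trans h'.symm) hp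
  · right
    refine ⟨?_, h⟩
    have h1 : two q1 q2 γ δ p2 = γ := by rw [h]; exact two_apply_left _ _ _ _
    rw [h1] at hdot
    have h2 : two q1 q2 γ δ p1 ≠ 0 := by
      intro h0
      rw [h0] at hdot
      simp at hdot
      rcases hdot with h'|h' <;> [exact hβne h'; exact hγne h']
    rcases hw p1 h2 with h'|h'
    · exact absurd (h'.trans h.symm) hp
    · exact h'
  · left
    refine ⟨?_, h⟩
    have h1 : two q1 q2 γ δ p2 = δ := by rw [h]; exact two_apply_right hq _ _
    rw [h1] at hdot
    have h2 : two q1 q2 γ δ p1 ≠ 0 := by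
      intro h0
      rw [h0] at hdot
      simp at hdot
      rcases hdot with h'|h' <;> [exact hβne h'; exact hδne h']
    rcases hw p1 h2 with h'|h'
    · exact h'
    · exact absurd (h'.trans h.symm) hp

/-- If two orthogonal standard chains share a coordinate, the first has length 1. -/
lemma chain_len_one {z z' : ℕ → Fin N → ℤ} {m m' : ℕ} {a a' : ℕ → Fin N} {s s' : ℕ → ℤ}
    (hm : 1 ≤ m) (hm' : 1 ≤ m')
    (h : StdChain z m a s) (h' : StdChain z' m' a' s')
    (hperp : ∀ j j', j < m → j' < m' → dot (z j) (z' j') = 0)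
    {k k' : ℕ} (hk : k ≤ m) (hk' : k' ≤ m') (he : a k = a' k') :
    m = 1 := by
  obtain ⟨hinj, hunit, hform⟩ := h
  obtain ⟨hinj', hunit', hform'⟩ := h'
  by_contra hm2
  have hm2' : 2 ≤ m := by omega
  -- the index of the chain vector of z containing coordinate a k
  obtain ⟨j, hjm, hjk⟩ : ∃ j, j < m ∧ (k = j ∨ k = j + 1) := by
    rcases Nat.lt_or_ge k m with h|h
    · exact ⟨k, h, Or.inl rfl⟩
    · exact ⟨m - 1, by omega, Or.inr (by omega)⟩
  obtain ⟨j', hjm', hjk'⟩ : ∃ j', j' < m' ∧ (k' = j' ∨ k' = j' + 1) := by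
    rcases Nat.lt_or_ge k' m' with h|h
    · exact ⟨k', h, Or.inl rfl⟩
    · exact ⟨m' - 1, by omega, Or.inr (by omega)⟩
  have hane : ∀ i, i < m → a i ≠ a (i + 1) := by
    intro i hi he'
    have := hinj i (i + 1) (by omega) (by omega) he'
    omega
  have hane' : ∀ i, i < m' → a' i ≠ a' (i + 1) := by
    intro i hi he'
    have := hinj' i (i + 1) (by omega) (by omega) he'
    omega
  -- supports of z j and z' j' are equal
  have hsupp : (a j = a' j' ∧ a (j + 1) = a' (j' + 1)) ∨
      (a j = a' (j' + 1) ∧ a (j + 1) = a' j') := by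
    have hβu : (-(s (j + 1))) * (-(s (j + 1))) = 1 := by
      have := hunit (j + 1) (by omega); linear_combination this
    have hδu : (-(s' (j' + 1))) * (-(s' (j' + 1))) = 1 := by
      have := hunit' (j' + 1) (by omega); linear_combination this
    have hd : dot (two (a j) (a (j + 1)) (s j) (-(s (j + 1))))
        (two (a' j') (a' (j' + 1)) (s' j') (-(s' (j' + 1)))) = 0 := by
      rw [← hform j hjm, ← hform' j' hjm']
      exact hperp j j' hjm hjm'
    have hsh : a j = a' j' ∨ a j = a' (j' + 1) ∨ a (j + 1) = a' j' ∨ a (j + 1) = a' (j' + 1) := by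
      rcases hjk with h1|h1 <;> rcases hjk' with h2|h2 <;> rw [h1, h2] at he
      · exact Or.inl he
      · exact Or.inr (Or.inl he)
      · exact Or.inr (Or.inr (Or.inl he))
      · exact Or.inr (Or.inr (Or.inr he))
    exact share_both (hane j hjm) (hane' j' hjm') (hunit j (by omega)) hβu
      (hunit' j' (by omega)) hδu hd hsh
  -- pick a neighbour w = z n of z j
  obtain ⟨c1, c2, σ1, σ2, hn, hc1, hu1, hu2⟩ :
      ∃ c1 c2 σ1 σ2, z' j' = two c1 c2 σ1 σ2 ∧
        (c1 = a j ∧ c2 = a (j + 1) ∨ c1 = a (j + 1) ∧ c2 = a j) ∧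
        σ1 * σ1 = 1 ∧ σ2 * σ2 = 1 := by
    rcases hsupp with ⟨h1, h2⟩ | ⟨h1, h2⟩
    · exact ⟨a' j', a' (j' + 1), s' j', -(s' (j' + 1)), hform' j' hjm',
        Or.inl ⟨h1.symm, h2.symm⟩, hunit' j' (by omega),
        by have := hunit' (j' + 1) (by omega); linear_combination this⟩
    · exact ⟨a' j', a' (j' + 1), s' j', -(s' (j' + 1)), hform' j' hjm',
        Or.inr ⟨h2.symm, h1.symm⟩, hunit' j' (by omega),
        by have := hunit' (j' + 1) (by omega); linear_combination this⟩
  have hval : ∀ x : Fin N, (x = a j ∨ x = a (j + 1)) → z' j' x * z' j' x = 1 := by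
    intro x hx
    rw [hn]
    have hc1c2 : c1 ≠ c2 := by
      rcases hc1 with ⟨e1, e2⟩|⟨e1, e2⟩ <;> rw [e1, e2]
      · exact hane j hjm
      · exact (hane j hjm).symm
    rcases hc1 with ⟨e1, e2⟩|⟨e1, e2⟩ <;> rcases hx with hx|hx <;> subst hx
    · rw [← e1, two_apply_left]; exact hu1
    · rw [← e2, two_apply_right hc1c2]; exact hu2
    · rw [← e2, two_apply_right hc1c2]; exact hu2
    · rw [← e1, two_apply_left]; exact hu1
  have hval0 : ∀ x : Fin N, x ≠ a j → x ≠ a (j + 1) → z' j' x = 0 := by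
    intro x h1 h2
    rw [hn]
    rcases hc1 with ⟨e1, e2⟩|⟨e1, e2⟩
    · exact two_apply_other (by rw [e1]; exact h1) (by rw [e2]; exact h2) _ _
    · exact two_apply_other (by rw [e1]; exact h2) (by rw [e2]; exact h1) _ _
  -- neighbour argument
  rcases Nat.lt_or_ge (j + 1) m with hnb | hnb
  · -- use w = z (j + 1) with coordinates a (j+1), a (j+2)
    have hd : dot (z (j + 1)) (z' j') = 0 := hperp (j + 1) j' hnb hjm'
    rw [hform (j + 1) hnb, dot_two (hane (j + 1) hnb)] at hd
    have h1 : z' j' (a (j + 2)) = 0 := by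
      apply hval0
      · intro he'
        have := hinj (j + 2) j (by omega) (by omega) he'
        omega
      · intro he'
        have := hinj (j + 2) (j + 1) (by omega) (by omega) he'
        omega
    rw [h1] at hd
    have h2 := hval (a (j + 1)) (Or.inr rfl)
    have hu := hunit (j + 1) (by omega)
    nlinarith [hd, h2, hu]
  · -- j + 1 = m, so j ≥ 1; use w = z (j - 1) with coordinates a (j-1), a j
    have hj1 : 1 ≤ j := by omega
    have hnb' : j - 1 < m := by omega
    have hd : dot (z (j - 1)) (z' j') = 0 := hperp (j - 1) j' hnb' hjm'
    rw [hform (j - 1) hnb', dot_two (hane (j - 1) hnb'), Nat.sub_add_cancel hj1] at hd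
    have h1 : z' j' (a (j - 1)) = 0 := by
      apply hval0
      · intro he'
        have := hinj (j - 1) j (by omega) (by omega) he'
        omega
      · intro he'
        have := hinj (j - 1) (j + 1) (by omega) (by omega) he'
        omega
    rw [h1] at hd
    have h2 := hval (a j) (Or.inl rfl)
    have hu := hunit j (by omega)
    nlinarith [hd, h2, hu]

lemma no_triple {c d : Fin N} (hcd : c ≠ d) {a1 a2 b1 b2 c1 c2 : ℤ}
    (ha1 : a1 * a1 = 1) (ha2 : a2 * a2 = 1) (hb1 : b1 * b1 = 1) (hb2 : b2 * b2 = 1)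
    (hc1 : c1 * c1 = 1) (hc2 : c2 * c2 = 1)
    (h12 : dot (two c d a1 a2) (two c d b1 b2) = 0)
    (h13 : dot (two c d a1 a2) (two c d c1 c2) = 0)
    (h23 : dot (two c d b1 b2) (two c d c1 c2) = 0) : False := by
  rw [dot_two hcd] at h12 h13 h23
  rw [two_apply_left, two_apply_right hcd] at h12 h13 h23
  rcases mul_self_eq_one_iff.mp ha1 with h|h <;> subst h <;>
    rcases mul_self_eq_one_iff.mp ha2 with h|h <;> subst h <;>
    rcases mul_self_eq_one_iff.mp hb1 with h|h <;> subst h <;>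
    rcases mul_self_eq_one_iff.mp hb2 with h|h <;> subst h <;>
    rcases mul_self_eq_one_iff.mp hc1 with h|h <;> subst h <;>
    rcases mul_self_eq_one_iff.mp hc2 with h|h <;> subst h <;>
    omega

lemma core {x₀ y zA zB : Fin N → ℤ} {zC : ℕ → Fin N → ℤ}
    {ℓ : ℕ} {a : ℕ → Fin N} {s : ℕ → ℤ} {c d : Fin N} {α β γ δ t : ℤ}
    (hl : 1 ≤ ℓ) (hN : N = ℓ + 4)
    (hstd : StdChain zC ℓ a s)
    (hcd : c ≠ d)
    (hzA : zA = two c d α β) (hzB : zB = two c d γ δ)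
    (hα : α * α = 1) (hβ : β * β = 1) (hγ : γ * γ = 1) (hδ : δ * δ = 1)
    (hAB : dot zA zB = 0)
    (hdisj : ∀ k, k ≤ ℓ → a k ≠ c ∧ a k ≠ d)
    (hx0 : dot x₀ x₀ = 3)
    (hx0A : dot x₀ zA = -1) (hx0B : dot x₀ zB = -1)
    (hx0C : ∀ j, j < ℓ → dot x₀ (zC j) = if j + 1 = ℓ then -1 else 0)
    (hyy : dot y y = t)
    (hyA : dot y zA = 0) (hyB : dot y zB = 0)
    (hyC : ∀ j, j < ℓ → dot y (zC j) = 0)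
    (hx0y : dot x₀ y = -1) :
    ∃ l : ℤ, t = ((ℓ : ℤ) + 1) * l ^ 2 + (l + 1) ^ 2 := by
  classical
  obtain ⟨hinj, hunit, hform⟩ := hstd
  have hane : ∀ i, i < ℓ → a i ≠ a (i + 1) := by
    intro i hi he'
    have := hinj i (i + 1) (by omega) (by omega) he'
    omega
  -- the partition of the coordinates
  have hdd : d ∉ (Finset.range (ℓ + 1)).image a := by
    simp only [Finset.mem_image, Finset.mem_range]
    rintro ⟨k, hk, hak⟩
    exact (hdisj k (by omega)).2 hak
  have hcc : c ∉ insert d ((Finset.range (ℓ + 1)).image a) := by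
    simp only [Finset.mem_insert, Finset.mem_image, Finset.mem_range]
    rintro (h | ⟨k, hk, hak⟩)
    · exact hcd h
    · exact (hdisj k (by omega)).1 hak
  have hinjOn : Set.InjOn a ↑(Finset.range (ℓ + 1)) := by
    intro x hx y hy he
    simp only [Finset.coe_range, Set.mem_Iio] at hx hy
    exact hinj x y (by omega) (by omega) he
  have hcard : (insert c (insert d ((Finset.range (ℓ + 1)).image a)))ᶜ.card = 1 := by
    rw [Finset.card_compl, Finset.card_insert_of_notMem hcc,
      Finset.card_insert_of_notMem hdd, Finset.card_image_of_injOn hinjOn,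
      Finset.card_range, Fintype.card_fin]
    omega
  obtain ⟨f0, hf0eq⟩ := Finset.card_eq_one.mp hcard
  have hf0mem : f0 ∉ insert c (insert d ((Finset.range (ℓ + 1)).image a)) := by
    rw [← Finset.mem_compl, hf0eq]
    exact Finset.mem_singleton_self f0
  have hf0c : f0 ≠ c := by intro h; exact hf0mem (by rw [h]; simp)
  have hf0d : f0 ≠ d := by intro h; exact hf0mem (by rw [h]; simp)
  have hf0a : ∀ k, k ≤ ℓ → f0 ≠ a k := by
    intro k hk h
    apply hf0mem
    simp only [Finset.mem_insert, Finset.mem_image, Finset.mem_range]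
    exact Or.inr (Or.inr ⟨k, by omega, h.symm⟩)
  have hsplit : ∀ g : Fin N → ℤ, (∑ x, g x)
      = g c + g d + (∑ k ∈ Finset.range (ℓ + 1), g (a k)) + g f0 := by
    intro g
    have h2 := Finset.sum_add_sum_compl (insert c (insert d ((Finset.range (ℓ + 1)).image a))) g
    rw [hf0eq, Finset.sum_singleton, Finset.sum_insert hcc, Finset.sum_insert hdd,
      Finset.sum_image (fun x hx y hy he => hinjOn (by simpa using hx) (by simpa using hy) he)]
      at h2
    linarith
  -- pair equations
  have hA' : α * x₀ c + β * x₀ d = -1 := by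
    rw [dot_comm, hzA, dot_two hcd] at hx0A; exact hx0A
  have hB' : γ * x₀ c + δ * x₀ d = -1 := by
    rw [dot_comm, hzB, dot_two hcd] at hx0B; exact hx0B
  have hAB' : α * γ + β * δ = 0 := by
    rw [hzA, hzB, dot_two hcd, two_apply_left, two_apply_right hcd] at hAB; exact hAB
  have hyA' : α * y c + β * y d = 0 := by
    rw [dot_comm, hzA, dot_two hcd] at hyA; exact hyA
  have hyB' : γ * y c + δ * y d = 0 := by
    rw [dot_comm, hzB, dot_two hcd] at hyB; exact hyB
  have hentx : ∀ x : Fin N, x₀ x = -1 ∨ x₀ x = 0 ∨ x₀ x = 1 := entries hx0 (by norm_num)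
  have hyc0 : y c = 0 ∧ y d = 0 := by
    rcases mul_self_eq_one_iff.mp hα with h1|h1 <;> subst h1 <;>
      rcases mul_self_eq_one_iff.mp hβ with h1|h1 <;> subst h1 <;>
      rcases mul_self_eq_one_iff.mp hγ with h1|h1 <;> subst h1 <;>
      rcases mul_self_eq_one_iff.mp hδ with h1|h1 <;> subst h1 <;>
      constructor <;> omega
  have hpair1 : x₀ c * x₀ c + x₀ d * x₀ d = 1 := by
    rcases mul_self_eq_one_iff.mp hα with h1|h1 <;> subst h1 <;>
      rcases mul_self_eq_one_iff.mp hβ with h1|h1 <;> subst h1 <;>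
      rcases hentx c with e1|e1|e1 <;> rcases hentx d with e2|e2|e2 <;>
      rw [e1, e2] <;> rw [e1, e2] at hA' <;> omega
  -- x₀ along the chain
  have hrelx : ∀ j, j + 1 < ℓ → s j * x₀ (a j) = s (j + 1) * x₀ (a (j + 1)) := by
    intro j hj
    have h0 := hx0C j (by omega)
    rw [if_neg (by omega : ¬ j + 1 = ℓ)] at h0
    rw [dot_comm, hform j (by omega), dot_two (hane j (by omega))] at h0
    linarith
  obtain ⟨η, hηdef⟩ : ∃ η : ℤ, η = s 0 * x₀ (a 0) := ⟨_, rfl⟩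
  have hη : ∀ j, j < ℓ → s j * x₀ (a j) = η := by
    intro j hj; rw [hηdef]; exact run_const hrelx j hj
  have hlx : s ℓ * x₀ (a ℓ) = η + 1 := by
    have h0 := hx0C (ℓ - 1) (by omega)
    rw [if_pos (by omega : ℓ - 1 + 1 = ℓ)] at h0
    rw [dot_comm, hform (ℓ - 1) (by omega), dot_two (hane (ℓ - 1) (by omega)),
      Nat.sub_add_cancel hl] at h0
    have := hη (ℓ - 1) (by omega)
    linarith
  have hxsq : ∀ j, j < ℓ → x₀ (a j) * x₀ (a j) = η * η := by
    intro j hj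
    have h1 := hη j hj
    have hu := hunit j (by omega)
    linear_combination (s j * x₀ (a j) + η) * h1 - (x₀ (a j) * x₀ (a j)) * hu
  have hxsql : x₀ (a ℓ) * x₀ (a ℓ) = (η + 1) * (η + 1) := by
    have hu := hunit ℓ (le_refl ℓ)
    linear_combination (s ℓ * x₀ (a ℓ) + (η + 1)) * hlx - (x₀ (a ℓ) * x₀ (a ℓ)) * hu
  have hsumx : (∑ k ∈ Finset.range (ℓ + 1), x₀ (a k) * x₀ (a k))
      = (ℓ : ℤ) * (η * η) + (η + 1) * (η + 1) := by
    rw [Finset.sum_range_succ, hxsql]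
    congr 1
    rw [Finset.sum_congr rfl (fun k hk => hxsq k (Finset.mem_range.mp hk))]
    simp [mul_comm]
  have hkey : (ℓ : ℤ) * (η * η) + (η + 1) * (η + 1) + x₀ f0 * x₀ f0 = 2 := by
    have h3 : (∑ x, x₀ x * x₀ x) = 3 := hx0
    rw [hsplit (fun x => x₀ x * x₀ x)] at h3
    rw [hsumx] at h3
    linarith
  -- y along the chain
  have hrely : ∀ j, j + 1 < ℓ + 1 → s j * y (a j) = s (j + 1) * y (a (j + 1)) := by
    intro j hj
    have h0 := hyC j (by omega)
    rw [dot_comm, hform j (by omega), dot_two (hane j (by omega))] at h0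
    linarith
  obtain ⟨μ, hμdef⟩ : ∃ μ : ℤ, μ = s 0 * y (a 0) := ⟨_, rfl⟩
  have hμ : ∀ j, j ≤ ℓ → s j * y (a j) = μ := by
    intro j hj; rw [hμdef]; exact run_const hrely j (by omega)
  have hysq : ∀ j, j ≤ ℓ → y (a j) * y (a j) = μ * μ := by
    intro j hj
    have h1 := hμ j hj
    have hu := hunit j hj
    linear_combination (s j * y (a j) + μ) * h1 - (y (a j) * y (a j)) * hu
  have hsumy : (∑ k ∈ Finset.range (ℓ + 1), y (a k) * y (a k)) = ((ℓ : ℤ) + 1) * (μ * μ) := by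
    rw [Finset.sum_congr rfl (fun k hk => hysq k (Nat.lt_succ_iff.mp (Finset.mem_range.mp hk)))]
    rw [Finset.sum_const, Finset.card_range, nsmul_eq_mul]
    push_cast
    ring
  have hty : t = ((ℓ : ℤ) + 1) * (μ * μ) + y f0 * y f0 := by
    have h3 : (∑ x, y x * y x) = t := hyy
    rw [hsplit (fun x => y x * y x)] at h3
    rw [hsumy, hyc0.1, hyc0.2] at h3
    linarith
  -- the inner product of x₀ and y
  have hxyk : ∀ k, k < ℓ → x₀ (a k) * y (a k) = η * μ := by
    intro k hk
    have h1 := hη k hk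
    have h2 := hμ k (by omega)
    have hu := hunit k (by omega)
    linear_combination (s k * y (a k)) * h1 + η * h2 - (x₀ (a k) * y (a k)) * hu
  have hxyl : x₀ (a ℓ) * y (a ℓ) = (η + 1) * μ := by
    have h2 := hμ ℓ (le_refl ℓ)
    have hu := hunit ℓ (le_refl ℓ)
    linear_combination (s ℓ * y (a ℓ)) * hlx + (η + 1) * h2 - (x₀ (a ℓ) * y (a ℓ)) * hu
  have hsumxy : (∑ k ∈ Finset.range (ℓ + 1), x₀ (a k) * y (a k))
      = (ℓ : ℤ) * (η * μ) + (η + 1) * μ := by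
    rw [Finset.sum_range_succ, hxyl]
    congr 1
    rw [Finset.sum_congr rfl (fun k hk => hxyk k (Finset.mem_range.mp hk))]
    simp [mul_comm]
  have hdotxy : (ℓ : ℤ) * (η * μ) + (η + 1) * μ + x₀ f0 * y f0 = -1 := by
    have h3 : (∑ x, x₀ x * y x) = -1 := hx0y
    rw [hsplit (fun x => x₀ x * y x)] at h3
    rw [hsumxy, hyc0.1, hyc0.2] at h3
    linarith
  have hlpos : (1 : ℤ) ≤ (ℓ : ℤ) := by exact_mod_cast hl
  have hηsmall : η = -1 ∨ η = 0 ∨ η = 1 := by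
    have h1 := hentx (a 0)
    have hu := hunit 0 (by omega)
    rcases mul_self_eq_one_iff.mp hu with h|h <;> rw [hηdef, h] <;> omega
  rcases hηsmall with hη1 | hη1 | hη1
  · -- η = -1
    subst hη1
    have hkey' : (ℓ : ℤ) + x₀ f0 * x₀ f0 = 2 := by linarith [hkey]
    rcases hentx f0 with e|e|e
    · -- x₀ f0 = -1
      have hsq1 : x₀ f0 * x₀ f0 = 1 := by rw [e]; ring
      have hl1 : (ℓ : ℤ) = 1 := by linarith
      rw [e, hl1] at hdotxy
      have hyf : y f0 = 1 - μ := by linarith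
      have hν2 : y f0 * y f0 = (μ - 1) * (μ - 1) := by rw [hyf]; ring
      refine ⟨-μ, ?_⟩
      rw [hl1] at hty ⊢
      linear_combination hty + hν2
    · -- x₀ f0 = 0
      have hsq0 : x₀ f0 * x₀ f0 = 0 := by rw [e]; ring
      have hl2 : (ℓ : ℤ) = 2 := by linarith
      rw [e, hl2] at hdotxy
      exfalso
      have h6 : (2 : ℤ) * μ = 1 := by linarith
      omega
    · -- x₀ f0 = 1
      have hsq1 : x₀ f0 * x₀ f0 = 1 := by rw [e]; ring
      have hl1 : (ℓ : ℤ) = 1 := by linarith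
      rw [e, hl1] at hdotxy
      have hyf : y f0 = μ - 1 := by linarith
      have hν2 : y f0 * y f0 = (μ - 1) * (μ - 1) := by rw [hyf]
      refine ⟨-μ, ?_⟩
      rw [hl1] at hty ⊢
      linear_combination hty + hν2
  · -- η = 0
    subst hη1
    have hf1 : x₀ f0 * x₀ f0 = 1 := by linarith [hkey]
    have heq : μ + x₀ f0 * y f0 = -1 := by linarith [hdotxy]
    have hν2 : y f0 * y f0 = (μ + 1) * (μ + 1) := by
      linear_combination (x₀ f0 * y f0 - (μ + 1)) * heq - (y f0 * y f0) * hf1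
    exact ⟨μ, by linear_combination hty + hν2⟩
  · -- η = 1 : impossible
    exfalso
    subst hη1
    have h5 : (ℓ : ℤ) + 4 + x₀ f0 * x₀ f0 = 2 := by linear_combination hkey
    have h6 := mul_self_nonneg (x₀ f0)
    linarith [h5, h6, hlpos]

lemma global {m : Fin 3 → ℕ} {zf : Fin 3 → ℕ → Fin N → ℤ} {x₀ y : Fin N → ℤ} {t : ℤ}
    (hm : ∀ i, 1 ≤ m i) (hN : N = m 0 + m 1 + m 2 + 2)
    (hchain : ∀ i, IsChain (zf i) (m i))
    (hcross : ∀ i i', i ≠ i' → ∀ j j', j < m i → j' < m i' → dot (zf i j) (zf i' j') = 0)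
    (hx0 : dot x₀ x₀ = 3)
    (hx0C : ∀ i j, j < m i → dot x₀ (zf i j) = if j + 1 = m i then -1 else 0)
    (hyy : dot y y = t)
    (hyC : ∀ i j, j < m i → dot y (zf i j) = 0)
    (hx0y : dot x₀ y = -1) :
    ∃ (l : ℤ) (i : Fin 3), (∀ i', i' ≠ i → m i' = 1) ∧
      t = ((m i : ℤ) + 1) * l ^ 2 + (l + 1) ^ 2 := by
  classical
  have hstd : ∀ i, ∃ a s, StdChain (zf i) (m i) a s :=
    fun i => chain_std_x0 (hm i) (hchain i) (hx0C i)
  choose A S hAS using hstd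
  -- pigeonhole: two chains share a coordinate
  have hcardlt : Fintype.card (Fin N) < Fintype.card ((i : Fin 3) × Fin (m i + 1)) := by
    rw [Fintype.card_sigma, Fin.sum_univ_three]
    simp only [Fintype.card_fin]
    omega
  obtain ⟨⟨i1, k1⟩, ⟨i2, k2⟩, hne, heq⟩ :=
    Fintype.exists_ne_map_eq_of_card_lt
      (fun x : (i : Fin 3) × Fin (m i + 1) => A x.1 x.2.val) hcardlt
  simp only at heq
  have hne12 : i1 ≠ i2 := by
    intro h
    subst h
    have hk : k1.val = k2.val :=
      (hAS i1).1 k1.val k2.val (by omega) (by omega) heq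
    have : k1 = k2 := Fin.ext hk
    subst this
    exact hne rfl
  -- both shared chains are singletons
  have hm1 : m i1 = 1 :=
    chain_len_one (hm i1) (hm i2) (hAS i1) (hAS i2)
      (hcross i1 i2 hne12) (by omega : k1.val ≤ m i1) (by omega : k2.val ≤ m i2) heq
  have hm2 : m i2 = 1 :=
    chain_len_one (hm i2) (hm i1) (hAS i2) (hAS i1)
      (fun j j' hj hj' => by rw [dot_comm]; exact hcross i1 i2 hne12 j' j hj' hj)
      (by omega : k2.val ≤ m i2) (by omega : k1.val ≤ m i1) heq.symm
  -- the remaining chain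
  have hex : ∀ a b : Fin 3, a ≠ b → ∃ c, c ≠ a ∧ c ≠ b ∧ ∀ j : Fin 3, j = a ∨ j = b ∨ j = c := by
    decide
  obtain ⟨i3, h31, h32, hcov⟩ := hex i1 i2 hne12
  have hsum3 : m 0 + m 1 + m 2 = m i1 + m i2 + m i3 := by
    have huniv : ({i1, i2, i3} : Finset (Fin 3)) = Finset.univ := by
      apply Finset.eq_univ_of_forall
      intro j
      rcases hcov j with h|h|h <;> simp [h]
    have hsum := Fin.sum_univ_three m
    rw [← huniv] at hsum
    rw [Finset.sum_insert (by simp [hne12, h31.symm, h32.symm]),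
      Finset.sum_insert (by simp [h32.symm]), Finset.sum_singleton] at hsum
    omega
  have hN3 : N = m i3 + 4 := by omega
  -- data of the two singleton chains
  have hstd1 := hAS i1
  have hstd2 := hAS i2
  have hform1 : zf i1 0 = two (A i1 0) (A i1 1) (S i1 0) (-(S i1 1)) :=
    hstd1.2.2 0 (by omega)
  have hform2 : zf i2 0 = two (A i2 0) (A i2 1) (S i2 0) (-(S i2 1)) :=
    hstd2.2.2 0 (by omega)
  have hcd1 : A i1 0 ≠ A i1 1 := by
    intro h
    have := hstd1.1 0 1 (by omega) (by omega) h
    omega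
  have hcd2 : A i2 0 ≠ A i2 1 := by
    intro h
    have := hstd2.1 0 1 (by omega) (by omega) h
    omega
  have hu10 := hstd1.2.1 0 (by omega)
  have hu11 : (-(S i1 1)) * (-(S i1 1)) = 1 := by
    have := hstd1.2.1 1 (by omega); linear_combination this
  have hu20 := hstd2.2.1 0 (by omega)
  have hu21 : (-(S i2 1)) * (-(S i2 1)) = 1 := by
    have := hstd2.2.1 1 (by omega); linear_combination this
  have hdotAB : dot (zf i1 0) (zf i2 0) = 0 := hcross i1 i2 hne12 0 0 (by omega) (by omega)
  -- align the support of chain i2 with that of chain i1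
  have hsh : A i1 0 = A i2 0 ∨ A i1 0 = A i2 1 ∨ A i1 1 = A i2 0 ∨ A i1 1 = A i2 1 := by
    have hk1 : k1.val = 0 ∨ k1.val = 1 := by omega
    have hk2 : k2.val = 0 ∨ k2.val = 1 := by omega
    rcases hk1 with h|h <;> rcases hk2 with h'|h' <;> rw [h, h'] at heq
    · exact Or.inl heq
    · exact Or.inr (Or.inl heq)
    · exact Or.inr (Or.inr (Or.inl heq))
    · exact Or.inr (Or.inr (Or.inr heq))
  have hsupp := share_both hcd1 hcd2 hu10 hu11 hu20 hu21
    (by rw [← hform1, ← hform2]; exact hdotAB) hsh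
  obtain ⟨γ, δ, hzB, hγ, hδ⟩ :
      ∃ γ δ, zf i2 0 = two (A i1 0) (A i1 1) γ δ ∧ γ * γ = 1 ∧ δ * δ = 1 := by
    rcases hsupp with ⟨e1, e2⟩ | ⟨e1, e2⟩
    · exact ⟨S i2 0, -(S i2 1), by rw [hform2, ← e1, ← e2], hu20, hu21⟩
    · exact ⟨-(S i2 1), S i2 0, by rw [hform2, two_comm hcd2, ← e1, ← e2], hu21, hu20⟩
  -- the third chain avoids the shared pair of coordinates
  have hdisj : ∀ k, k ≤ m i3 → A i3 k ≠ A i1 0 ∧ A i3 k ≠ A i1 1 := by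
    intro k hk
    have hkey : ∀ k', k' ≤ 1 → A i3 k = A i1 k' → False := by
      intro k' hk' he
      have hm3 : m i3 = 1 :=
        chain_len_one (hm i3) (hm i1) (hAS i3) (hAS i1)
          (hcross i3 i1 h31) hk (by omega) he
      have hform3 : zf i3 0 = two (A i3 0) (A i3 1) (S i3 0) (-(S i3 1)) :=
        (hAS i3).2.2 0 (by omega)
      have hcd3 : A i3 0 ≠ A i3 1 := by
        intro h
        have := (hAS i3).1 0 1 (by omega) (by omega) h
        omega
      have hu30 := (hAS i3).2.1 0 (by omega)
      have hu31 : (-(S i3 1)) * (-(S i3 1)) = 1 := by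
        have := (hAS i3).2.1 1 (by omega); linear_combination this
      have hsh3 : A i3 0 = A i1 0 ∨ A i3 0 = A i1 1 ∨ A i3 1 = A i1 0 ∨ A i3 1 = A i1 1 := by
        have hk3 : k = 0 ∨ k = 1 := by omega
        have hk4 : k' = 0 ∨ k' = 1 := by omega
        rcases hk3 with h|h <;> rcases hk4 with h'|h' <;> rw [h, h'] at he
        · exact Or.inl he
        · exact Or.inr (Or.inl he)
        · exact Or.inr (Or.inr (Or.inl he))
        · exact Or.inr (Or.inr (Or.inr he))
      have hsupp3 := share_both hcd3 hcd1 hu30 hu31 hu10 hu11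
        (by rw [← hform3, ← hform1]; exact hcross i3 i1 h31 0 0 (by omega) (by omega)) hsh3
      obtain ⟨γ', δ', hzC0, hγ', hδ'⟩ :
          ∃ γ' δ', zf i3 0 = two (A i1 0) (A i1 1) γ' δ' ∧ γ' * γ' = 1 ∧ δ' * δ' = 1 := by
        rcases hsupp3 with ⟨e1, e2⟩ | ⟨e1, e2⟩
        · exact ⟨S i3 0, -(S i3 1), by rw [hform3, e1, e2], hu30, hu31⟩
        · exact ⟨-(S i3 1), S i3 0, by rw [hform3, two_comm hcd3, e2, e1], hu31, hu30⟩
      exact no_triple hcd1 hu10 hu11 hγ hδ hγ' hδ'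
        (by rw [← hform1, ← hzB]; exact hdotAB)
        (by rw [← hform1, ← hzC0]; exact hcross i1 i3 (Ne.symm h31) 0 0 (by omega) (by omega))
        (by rw [← hzB, ← hzC0]; exact hcross i2 i3 (Ne.symm h32) 0 0 (by omega) (by omega))
    exact ⟨fun h => hkey 0 (by omega) h, fun h => hkey 1 (by omega) h⟩
  have hx0A : dot x₀ (zf i1 0) = -1 := by
    have := hx0C i1 0 (by omega)
    rwa [if_pos (by omega : 0 + 1 = m i1)] at this
  have hx0B : dot x₀ (zf i2 0) = -1 := by
    have := hx0C i2 0 (by omega)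
    rwa [if_pos (by omega : 0 + 1 = m i2)] at this
  obtain ⟨l, hl⟩ := core (hm i3) hN3 (hAS i3) hcd1 hform1 hzB hu10 hu11 hγ hδ
    hdotAB hdisj hx0 hx0A hx0B (hx0C i3) hyy (hyC i1 0 (by omega)) (hyC i2 0 (by omega))
    (hyC i3) hx0y
  refine ⟨l, i3, ?_, hl⟩
  intro i' hi'
  rcases hcov i' with h|h|h
  · rw [h]; exact hm1
  · rw [h]; exact hm2
  · exact absurd h hi'


end P16

/-- If the plumbing `X(p, q, r, s)` with `p, q, r ≥ 2` and `s ≤ −1` admits a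
lattice embedding into `ℤ^(p+q+r−1)`, then two of `p, q, r` are equal to 2 and,
with `u` the remaining one, `s = −uλ² − (λ+1)²` for some integer `λ`. -/
theorem stmt_16 (p q r : ℕ) (hp : 2 ≤ p) (hq : 2 ≤ q) (hr : 2 ≤ r)
    (s : ℤ) (hs : s ≤ -1) (N : ℕ) (hN : N = p + q + r - 1)
    (h : ∃ φ : ((Unit ⊕ ((Σ i : Fin 3, Fin (![p - 1, q - 1, r - 1] i)) ⊕ Unit)) → ℤ) →ₗ[ℤ]
        (Fin N → ℤ),
      IsLatticeEmbedding
        (starGram (-3) ![p - 1, q - 1, r - 1] (fun _ : Unit => s)) N φ) :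
    ∃ l : ℤ,
      (p = 2 ∧ q = 2 ∧ s = -(r : ℤ) * l ^ 2 - (l + 1) ^ 2) ∨
      (p = 2 ∧ r = 2 ∧ s = -(q : ℤ) * l ^ 2 - (l + 1) ^ 2) ∨
      (q = 2 ∧ r = 2 ∧ s = -(p : ℤ) * l ^ 2 - (l + 1) ^ 2) := by
  classical
  obtain ⟨φ, hφ⟩ := h
  have hfin : ∀ x : Fin 3, x = 0 ∨ x = 1 ∨ x = 2 := by decide
  have hL0 : (![p - 1, q - 1, r - 1] : Fin 3 → ℕ) 0 = p - 1 := rfl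
  have hL1 : (![p - 1, q - 1, r - 1] : Fin 3 → ℕ) 1 = q - 1 := rfl
  have hL2 : (![p - 1, q - 1, r - 1] : Fin 3 → ℕ) 2 = r - 1 := rfl
  have hm : ∀ i : Fin 3, 1 ≤ ![p - 1, q - 1, r - 1] i := by
    intro i
    rcases hfin i with rfl|rfl|rfl
    · rw [hL0]; omega
    · rw [hL1]; omega
    · rw [hL2]; omega
  have gram : ∀ u v : Unit ⊕ ((Σ i : Fin 3, Fin (![p - 1, q - 1, r - 1] i)) ⊕ Unit),
      P16.dot (φ (Pi.single u 1)) (φ (Pi.single v 1))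
        = -(starGram (-3) ![p - 1, q - 1, r - 1] (fun _ : Unit => s) u v) := by
    intro u v
    have h1 := hφ (Pi.single u 1) (Pi.single v 1)
    have h2 : (∑ a, ∑ b, (Pi.single u 1 : _ → ℤ) a
          * starGram (-3) ![p - 1, q - 1, r - 1] (fun _ : Unit => s) a b
          * (Pi.single v 1 : _ → ℤ) b)
        = starGram (-3) ![p - 1, q - 1, r - 1] (fun _ : Unit => s) u v := by
      rw [Finset.sum_eq_single u]
      · rw [Finset.sum_eq_single v]
        · simp
        · intro b _ hb
          rw [Pi.single_eq_of_ne (M := fun _ => ℤ) hb 1, mul_zero]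
        · intro hv; exact absurd (Finset.mem_univ v) hv
      · intro a _ ha
        apply Finset.sum_eq_zero
        intro b _
        rw [Pi.single_eq_of_ne (M := fun _ => ℤ) ha 1, zero_mul, zero_mul]
      · intro hu; exact absurd (Finset.mem_univ u) hu
    unfold P16.dot
    rw [h1, h2]
  -- entries of the Gram matrix
  have Qcc : starGram (-3) ![p - 1, q - 1, r - 1] (fun _ : Unit => s)
      (Sum.inl ()) (Sum.inl ()) = -3 := rfl
  have Qcz : ∀ (i : Fin 3) (j : ℕ) (hj : j < ![p - 1, q - 1, r - 1] i),
      starGram (-3) ![p - 1, q - 1, r - 1] (fun _ : Unit => s) (Sum.inl ())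
        (Sum.inr (Sum.inl ⟨i, ⟨j, hj⟩⟩))
      = if j + 1 = ![p - 1, q - 1, r - 1] i then 1 else 0 := fun _ _ _ => rfl
  have Qce : starGram (-3) ![p - 1, q - 1, r - 1] (fun _ : Unit => s)
      (Sum.inl ()) (Sum.inr (Sum.inr ())) = 1 := rfl
  have Qzz : ∀ (i i' : Fin 3) (j j' : ℕ) (hj : j < ![p - 1, q - 1, r - 1] i)
      (hj' : j' < ![p - 1, q - 1, r - 1] i'),
      starGram (-3) ![p - 1, q - 1, r - 1] (fun _ : Unit => s)
        (Sum.inr (Sum.inl ⟨i, ⟨j, hj⟩⟩)) (Sum.inr (Sum.inl ⟨i', ⟨j', hj'⟩⟩))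
      = if i = i' then
          (if j = j' then -2 else if j + 1 = j' ∨ j' + 1 = j then 1 else 0)
        else 0 := fun _ _ _ _ _ _ => rfl
  have Qze : ∀ (i : Fin 3) (j : ℕ) (hj : j < ![p - 1, q - 1, r - 1] i),
      starGram (-3) ![p - 1, q - 1, r - 1] (fun _ : Unit => s)
        (Sum.inr (Sum.inl ⟨i, ⟨j, hj⟩⟩)) (Sum.inr (Sum.inr ())) = 0 := fun _ _ _ => rfl
  have Qee : starGram (-3) ![p - 1, q - 1, r - 1] (fun _ : Unit => s)
      (Sum.inr (Sum.inr ())) (Sum.inr (Sum.inr ())) = s := rfl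
  -- the vectors
  obtain ⟨x₀, hx₀def⟩ : ∃ v, v = φ (Pi.single (Sum.inl ()) 1) := ⟨_, rfl⟩
  obtain ⟨yv, hyvdef⟩ : ∃ v, v = φ (Pi.single (Sum.inr (Sum.inr ())) 1) := ⟨_, rfl⟩
  obtain ⟨zf, hzfd⟩ : ∃ zf : Fin 3 → ℕ → Fin N → ℤ,
      zf = fun i j => if hj : j < ![p - 1, q - 1, r - 1] i
        then φ (Pi.single (Sum.inr (Sum.inl ⟨i, ⟨j, hj⟩⟩)) 1) else 0 := ⟨_, rfl⟩
  have hzf : ∀ (i : Fin 3) (j : ℕ) (hj : j < ![p - 1, q - 1, r - 1] i),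
      zf i j = φ (Pi.single (Sum.inr (Sum.inl ⟨i, ⟨j, hj⟩⟩)) 1) := by
    intro i j hj
    rw [hzfd]
    exact dif_pos hj
  have hchain : ∀ i, P16.IsChain (zf i) (![p - 1, q - 1, r - 1] i) := by
    intro i
    refine ⟨?_, ?_, ?_⟩
    · intro j hj
      rw [hzf i j hj, gram, Qzz i i j j hj hj, if_pos rfl, if_pos rfl]
      try norm_num
    · intro j hj
      rw [hzf i j (by omega), hzf i (j + 1) hj, gram, Qzz i i j (j + 1) (by omega) hj,
        if_pos rfl, if_neg (by omega : ¬ j = j + 1), if_pos (Or.inl rfl)]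
      try norm_num
    · intro j k hjk hk hne
      rw [hzf i j (by omega), hzf i k hk, gram, Qzz i i j k (by omega) hk,
        if_pos rfl, if_neg (by omega : ¬ j = k),
        if_neg (by omega : ¬ (j + 1 = k ∨ k + 1 = j))]
      try norm_num
  have hcross : ∀ i i', i ≠ i' → ∀ j j', j < ![p - 1, q - 1, r - 1] i →
      j' < ![p - 1, q - 1, r - 1] i' → P16.dot (zf i j) (zf i' j') = 0 := by
    intro i i' hii j j' hj hj'
    rw [hzf i j hj, hzf i' j' hj', gram, Qzz i i' j j' hj hj', if_neg hii]
    try norm_num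
  have hx0 : P16.dot x₀ x₀ = 3 := by
    rw [hx₀def, gram, Qcc]; try norm_num
  have hx0C : ∀ i j, j < ![p - 1, q - 1, r - 1] i →
      P16.dot x₀ (zf i j) = if j + 1 = ![p - 1, q - 1, r - 1] i then -1 else 0 := by
    intro i j hj
    rw [hx₀def, hzf i j hj, gram, Qcz i j hj]
    split_ifs <;> norm_num
  have hyy : P16.dot yv yv = -s := by
    rw [hyvdef, gram, Qee]
  have hyC : ∀ i j, j < ![p - 1, q - 1, r - 1] i → P16.dot yv (zf i j) = 0 := by
    intro i j hj
    rw [hyvdef, hzf i j hj, P16.dot_comm, gram, Qze i j hj]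
    try norm_num
  have hx0y : P16.dot x₀ yv = -1 := by
    rw [hx₀def, hyvdef, gram, Qce]
    try norm_num
  have hN' : N = ![p - 1, q - 1, r - 1] 0 + ![p - 1, q - 1, r - 1] 1
      + ![p - 1, q - 1, r - 1] 2 + 2 := by
    rw [hL0, hL1, hL2]; omega
  obtain ⟨l, i3, hsingle, ht⟩ := P16.global hm hN' hchain hcross hx0 hx0C hyy hyC hx0y
  refine ⟨l, ?_⟩
  rcases hfin i3 with rfl|rfl|rfl
  · -- third chain is the p-chain : q = 2 and r = 2
    have hq2 : q = 2 := by have := hsingle 1 (by decide); rw [hL1] at this; omega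
    have hr2 : r = 2 := by have := hsingle 2 (by decide); rw [hL2] at this; omega
    rw [hL0] at ht
    have hc : ((p - 1 : ℕ) : ℤ) = (p : ℤ) - 1 := by omega
    exact Or.inr (Or.inr ⟨hq2, hr2, by linear_combination (-1 : ℤ) * ht - l ^ 2 * hc⟩)
  · have hp2 : p = 2 := by have := hsingle 0 (by decide); rw [hL0] at this; omega
    have hr2 : r = 2 := by have := hsingle 2 (by decide); rw [hL2] at this; omega
    rw [hL1] at ht
    have hc : ((q - 1 : ℕ) : ℤ) = (q : ℤ) - 1 := by omega
    exact Or.inr (Or.inl ⟨hp2, hr2, by linear_combination (-1 : ℤ) * ht - l ^ 2 * hc⟩)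
  · have hp2 : p = 2 := by have := hsingle 0 (by decide); rw [hL0] at this; omega
    have hq2 : q = 2 := by have := hsingle 1 (by decide); rw [hL1] at this; omega
    rw [hL2] at ht
    have hc : ((r - 1 : ℕ) : ℤ) = (r : ℤ) - 1 := by omega
    exact Or.inl ⟨hp2, hq2, by linear_combination (-1 : ℤ) * ht - l ^ 2 * hc⟩
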